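/- Let A and B be lattices each having a least element 0. If every compact bi-ideal of A×B is capped, then the tensor product A⊗B is a lattice; that is, the intersection of any two compact bi-ideals of A×B is compact. -/
import Mathlib


/-! Tensor products of lattices with zero: bi-ideals, pure tensors,
compact bi-ideals, capped bi-ideals. -/

universe u v

section TensorDefs

variable {A : Type u} {B : Type v}

/-- The set `⊥_{A,B} = (A × {0}) ∪ ({0} × B)`. -/
def tensorBot (A : Type u) (B : Type v) [Lattice A] [OrderBot A]
    [Lattice B] [OrderBot B] : Set (A × B) :=
  {p | p.1 = ⊥ ∨ p.2 = ⊥}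

/-- A bi-ideal of `A × B`: a down-set containing `⊥_{A,B}` and closed under
lateral joins. -/
def IsBiIdeal [Lattice A] [OrderBot A] [Lattice B] [OrderBot B]
    (I : Set (A × B)) : Prop :=
  tensorBot A B ⊆ I ∧
  (∀ p ∈ I, ∀ q : A × B, q.1 ≤ p.1 → q.2 ≤ p.2 → q ∈ I) ∧
  (∀ a : A, ∀ b b' : B, (a, b) ∈ I → (a, b') ∈ I → (a, b ⊔ b') ∈ I) ∧
  (∀ a a' : A, ∀ b : B, (a, b) ∈ I → (a', b) ∈ I → (a ⊔ a', b) ∈ I)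

/-- The pure tensor `a ⊗ b = ⊥_{A,B} ∪ {(x,y) : x ≤ a ∧ y ≤ b}`. -/
def pureTensor [Lattice A] [OrderBot A] [Lattice B] [OrderBot B]
    (a : A) (b : B) : Set (A × B) :=
  tensorBot A B ∪ {p | p.1 ≤ a ∧ p.2 ≤ b}

/-- The smallest bi-ideal of `A × B` containing a given set, i.e. the join in the
lattice `A ⊗̄ B` of bi-ideals of the pure tensors contained in it. -/
def biIdealGen [Lattice A] [OrderBot A] [Lattice B] [OrderBot B]
    (S : Set (A × B)) : Set (A × B) :=
  ⋂₀ {I : Set (A × B) | IsBiIdeal I ∧ S ⊆ I}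

/-- The compact elements of `A ⊗̄ B` are exactly the bi-ideals that are finite
joins of pure tensors; these form the tensor product `A ⊗ B`. -/
def IsCompactBiIdeal [Lattice A] [OrderBot A] [Lattice B] [OrderBot B]
    (I : Set (A × B)) : Prop :=
  ∃ s : Finset (A × B), I = biIdealGen (⋃ p ∈ s, pureTensor p.1 p.2)

/-- `A ⊗ B` is a lattice iff the intersection of any two compact bi-ideals is
compact. -/
def TensorIsLattice (A : Type u) (B : Type v) [Lattice A] [OrderBot A]
    [Lattice B] [OrderBot B] : Prop :=
  ∀ I J : Set (A × B), IsCompactBiIdeal I → IsCompactBiIdeal J →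
    IsCompactBiIdeal (I ∩ J)

/-- A bi-ideal is capped if it is the down-set generated by `Γ ∪ ⊥_{A,B}` for some
finite `Γ ⊆ A × B`. -/
def IsCappedBiIdeal [Lattice A] [OrderBot A] [Lattice B] [OrderBot B]
    (I : Set (A × B)) : Prop :=
  ∃ Γ : Finset (A × B),
    I = tensorBot A B ∪ {q : A × B | ∃ p ∈ Γ, q.1 ≤ p.1 ∧ q.2 ≤ p.2}

/-- `A ⊗ B` is a capped tensor product if every element of `A ⊗ B` (i.e. every
compact bi-ideal of `A × B`) is capped. -/
def IsCappedTensorProduct (A : Type u) (B : Type v) [Lattice A] [OrderBot A]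
    [Lattice B] [OrderBot B] : Prop :=
  ∀ I : Set (A × B), IsCompactBiIdeal I → IsCappedBiIdeal I

end TensorDefs

section Aux

variable {A : Type u} {B : Type v} [Lattice A] [OrderBot A] [Lattice B] [OrderBot B]

lemma isBiIdeal_biIdealGen (S : Set (A × B)) : IsBiIdeal (biIdealGen S) := by
  refine ⟨?_, ?_, ?_, ?_⟩
  · intro p hp
    intro K hK
    exact hK.1.1 hp
  · intro p hp q h1 h2 K hK
    exact hK.1.2.1 p (hp K hK) q h1 h2
  · intro a b b' h1 h2 K hK
    exact hK.1.2.2.1 a b b' (h1 K hK) (h2 K hK)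
  · intro a a' b h1 h2 K hK
    exact hK.1.2.2.2 a a' b (h1 K hK) (h2 K hK)

lemma biIdealGen_subset {S K : Set (A × B)} (hK : IsBiIdeal K) (hSK : S ⊆ K) :
    biIdealGen S ⊆ K := fun _ hq => hq K ⟨hK, hSK⟩

lemma subset_biIdealGen (S : Set (A × B)) : S ⊆ biIdealGen S :=
  fun _ hq K hK => hK.2 hq

lemma isBiIdeal_inter {I J : Set (A × B)} (hI : IsBiIdeal I) (hJ : IsBiIdeal J) :
    IsBiIdeal (I ∩ J) := by
  refine ⟨fun p hp => ⟨hI.1 hp, hJ.1 hp⟩, ?_, ?_, ?_⟩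
  · intro p hp q h1 h2
    exact ⟨hI.2.1 p hp.1 q h1 h2, hJ.2.1 p hp.2 q h1 h2⟩
  · intro a b b' h1 h2
    exact ⟨hI.2.2.1 a b b' h1.1 h2.1, hJ.2.2.1 a b b' h1.2 h2.2⟩
  · intro a a' b h1 h2
    exact ⟨hI.2.2.2 a a' b h1.1 h2.1, hJ.2.2.2 a a' b h1.2 h2.2⟩

lemma isBiIdeal_of_compact {I : Set (A × B)} (hI : IsCompactBiIdeal I) :
    IsBiIdeal I := by
  obtain ⟨s, rfl⟩ := hI
  exact isBiIdeal_biIdealGen _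

end Aux

/-- if every compact bi-ideal of `A × B` is capped, then the
tensor product `A ⊗ B` is a lattice, i.e. the intersection of any two compact
bi-ideals is compact. -/
theorem capped_tensor_product_is_lattice (A : Type u) (B : Type v)
    [Lattice A] [OrderBot A] [Lattice B] [OrderBot B]
    (hcapped : IsCappedTensorProduct A B) :
    TensorIsLattice A B := by
  classical
  intro I J hI hJ
  have hIbi := isBiIdeal_of_compact hI
  have hJbi := isBiIdeal_of_compact hJ
  obtain ⟨Γ₁, hΓ₁⟩ := hcapped I hI
  obtain ⟨Γ₂, hΓ₂⟩ := hcapped J hJ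
  set s : Finset (A × B) :=
    (Γ₁ ×ˢ Γ₂).image (fun pq => (pq.1.1 ⊓ pq.2.1, pq.1.2 ⊓ pq.2.2)) with hs
  refine ⟨s, ?_⟩
  have hIJbi : IsBiIdeal (I ∩ J) := isBiIdeal_inter hIbi hJbi
  apply Set.Subset.antisymm
  · -- I ∩ J ⊆ biIdealGen ...
    intro q hq
    have hqI : q ∈ I := hq.1
    have hqJ : q ∈ J := hq.2
    rw [hΓ₁] at hqI
    rw [hΓ₂] at hqJ
    rcases hqI with hb | ⟨p, hp, hp1, hp2⟩
    · exact (isBiIdeal_biIdealGen _).1 hb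
    rcases hqJ with hb | ⟨p', hp', hp1', hp2'⟩
    · exact (isBiIdeal_biIdealGen _).1 hb
    · apply subset_biIdealGen
      have hmem : (p.1 ⊓ p'.1, p.2 ⊓ p'.2) ∈ s := by
        apply Finset.mem_image.mpr
        exact ⟨(p, p'), Finset.mem_product.mpr ⟨hp, hp'⟩, rfl⟩
      refine Set.mem_biUnion hmem ?_
      exact Or.inr ⟨le_inf hp1 hp1', le_inf hp2 hp2'⟩
  · -- biIdealGen ... ⊆ I ∩ J
    apply biIdealGen_subset hIJbi
    intro q hq
    simp only [Set.mem_iUnion] at hq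
    obtain ⟨r, hr, hqr⟩ := hq
    rw [hs, Finset.mem_image] at hr
    obtain ⟨⟨p, p'⟩, hpp', rfl⟩ := hr
    rw [Finset.mem_product] at hpp'
    rcases hqr with hb | ⟨h1, h2⟩
    · exact ⟨hIbi.1 hb, hJbi.1 hb⟩
    · constructor
      · rw [hΓ₁]
        exact Or.inr ⟨p, hpp'.1, le_trans h1 inf_le_left, le_trans h2 inf_le_left⟩
      · rw [hΓ₂]
        exact Or.inr ⟨p', hpp'.2, le_trans h1 inf_le_right, le_trans h2 inf_le_right⟩
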